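/- Let G be an MPDAG and let p = <A1, V1, ..., Yk> be a shortest (minimum number of edges) proper possibly causal path from a node set A to a node set Y that starts with an undirected edge A1 - V1. Then the subpath p(V1, Yk) from V1 to the endpoint is an unshielded path in G. -/

import Mathlib

/-- A partially directed graph: directed edges `dir` and undirected edges `undir`. -/
structure PDAG (V : Type) where
  dir : V → V → Prop
  undir : V → V → Prop
  undir_symm : ∀ a b, undir a b → undir b a

namespace PDAG

variable {V : Type}

/-- Two nodes are adjacent if joined by a directed or undirected edge. -/
def adj (G : PDAG V) (a b : V) : Prop := G.dir a b ∨ G.dir b a ∨ G.undir a b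

/-- Each pair of nodes is joined by at most one edge, and no self loops. -/
def Wellformed (G : PDAG V) : Prop :=
  (∀ a b, ¬ (G.dir a b ∧ G.dir b a)) ∧ (∀ a b, ¬ (G.dir a b ∧ G.undir a b)) ∧
  (∀ a, ¬ G.undir a a)

/-- No directed cycles. -/
def Acyclic (G : PDAG V) : Prop := ∀ a, ¬ Relation.TransGen G.dir a a

/-- Closure under Meek's orientation rules R1–R4. -/
def MeekClosed (G : PDAG V) : Prop :=
  (∀ a b c, G.dir a b → G.undir b c → ¬ G.adj a c → G.dir b c) ∧
  (∀ a b c, G.dir a c → G.dir c b → G.undir a b → G.dir a b) ∧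
  (∀ a b c d, G.undir a b → G.undir a c → G.undir a d → G.dir c b → G.dir d b →
    ¬ G.adj c d → G.dir a b) ∧
  (∀ a b c d, G.undir d a → G.undir d b → G.undir d c → G.dir a b → G.dir b c →
    ¬ G.adj a c → G.dir d c)

/-- A maximally oriented PDAG. -/
def IsMPDAG (G : PDAG V) : Prop := G.Wellformed ∧ G.Acyclic ∧ G.MeekClosed

/-- A DAG: acyclic, no undirected edges. -/
def IsDAG (G : PDAG V) : Prop := G.Wellformed ∧ G.Acyclic ∧ ∀ a b, ¬ G.undir a b

/-- A path: at least two distinct nodes, consecutive ones adjacent. -/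
def IsPath (G : PDAG V) (p : List V) : Prop :=
  2 ≤ p.length ∧ p.Nodup ∧ List.Chain' G.adj p

/-- Possibly causal path: no edge `Vi ← Vj` in `G` for `i < j` among the path's nodes. -/
def PossiblyCausal (G : PDAG V) (p : List V) : Prop :=
  p.Pairwise (fun a b => ¬ G.dir b a)

/-- Causal path: every consecutive edge directed forwards. -/
def Causal (G : PDAG V) (p : List V) : Prop := List.Chain' G.dir p

/-- Unshielded path: endpoints of every consecutive triple are nonadjacent. -/
def Unshielded (G : PDAG V) (p : List V) : Prop :=
  ∀ a b c, [a, b, c] <:+: p → ¬ G.adj a c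

/-- Proper path w.r.t. `A`: only the first node is in `A`. -/
def ProperFrom (A : Set V) (p : List V) : Prop :=
  ∃ a t, p = a :: t ∧ a ∈ A ∧ ∀ x ∈ t, x ∉ A

/-- The path ends in the set `Y`. -/
def EndsIn (p : List V) (Y : Set V) : Prop := ∃ y, p.getLast? = some y ∧ y ∈ Y

/-- The path starts with an undirected edge. -/
def StartsUndir (G : PDAG V) (p : List V) : Prop :=
  ∃ a b t, p = a :: b :: t ∧ G.undir a b

/-- The path starts with a directed edge. -/
def StartsDir (G : PDAG V) (p : List V) : Prop :=
  ∃ a b t, p = a :: b :: t ∧ G.dir a b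

/-- A proper possibly causal path from `A` to `Y`. -/
def PPCPath (G : PDAG V) (A Y : Set V) (p : List V) : Prop :=
  G.IsPath p ∧ G.PossiblyCausal p ∧ ProperFrom A p ∧ EndsIn p Y

/-- Perković's identifiability condition: every proper possibly causal path from `A`
to `Y` starts with a directed edge. -/
def IdCond (G : PDAG V) (A Y : Set V) : Prop :=
  ∀ p, G.PPCPath A Y p → G.StartsDir p

/-- A violating path: proper possibly causal from `A` to `Y` starting with an
undirected edge. -/
def ViolPath (G : PDAG V) (A Y : Set V) (p : List V) : Prop :=
  G.PPCPath A Y p ∧ G.StartsUndir p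

/-- A shortest violating path. -/
def ShortestViol (G : PDAG V) (A Y : Set V) (p : List V) : Prop :=
  G.ViolPath A Y p ∧ ∀ q, G.ViolPath A Y q → p.length ≤ q.length

/-- Same adjacencies. -/
def SameAdj (G' G : PDAG V) : Prop := ∀ a b, G'.adj a b ↔ G.adj a b

/-- Same unshielded colliders. -/
def SameUC (G' G : PDAG V) : Prop :=
  ∀ a b c, (G'.dir a b ∧ G'.dir c b ∧ ¬ G'.adj a c) ↔
    (G.dir a b ∧ G.dir c b ∧ ¬ G.adj a c)

/-- `G'` is represented by `G`: same adjacencies, same unshielded colliders, and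
every directed edge of `G` appears in `G'`. -/
def RepresentedBy (G' G : PDAG V) : Prop :=
  SameAdj G' G ∧ SameUC G' G ∧ ∀ a b, G.dir a b → G'.dir a b

/-- `G1 = MPDAG(G, {A1 → V1})`: the least maximally oriented graph represented by `G`
containing the orientation `A1 → V1`. -/
def IsOrientClosure (G : PDAG V) (A1 V1 : V) (G1 : PDAG V) : Prop :=
  G1.IsMPDAG ∧ RepresentedBy G1 G ∧ G1.dir A1 V1 ∧
  (∀ a b, G1.undir a b ↔ (G.adj a b ∧ ¬ G1.dir a b ∧ ¬ G1.dir b a)) ∧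
  (∀ H : PDAG V, H.IsMPDAG → RepresentedBy H G → H.dir A1 V1 →
    ∀ a b, G1.dir a b → H.dir a b)

end PDAG

/-- If `p` is a shortest proper possibly causal path from `A` to `Y` starting with an
undirected edge in an MPDAG `G`, then the subpath of `p` from its second node to its
endpoint is unshielded. -/
theorem stmt5 {V : Type} (G : PDAG V) (hG : G.IsMPDAG) (A Y : Set V)
    (hAY : Disjoint A Y) (p : List V) (hshort : G.ShortestViol A Y p) :
    G.Unshielded p.tail := by
  obtain ⟨⟨⟨⟨hlen, hnodup, hchain⟩, hpc, hproper, hends⟩, hstart⟩, hmin⟩ := hshort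
  intro a b c hinf hadj
  obtain ⟨A1, V1, t0, hpeq, hund⟩ := hstart
  obtain ⟨s, t, htail⟩ := hinf
  have hp : p = A1 :: (s ++ a :: b :: c :: t) := by
    rw [hpeq]
    congr 1
    have : p.tail = V1 :: t0 := by rw [hpeq]; rfl
    rw [this] at htail
    simpa using htail.symm
  set q : List V := A1 :: (s ++ a :: c :: t) with hq
  have hsub : List.Sublist q p := by
    rw [hp, hq]
    exact (List.Sublist.cons₂ A1 (List.Sublist.append_left
      (List.Sublist.cons₂ a (List.Sublist.cons b (List.Sublist.refl _))) s))
  -- chain decomposition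
  have hch : List.Chain' G.adj ((A1 :: s) ++ a :: b :: c :: t) := by
    rw [hp] at hchain; simpa using hchain
  rw [List.Chain', List.isChain_append] at hch
  obtain ⟨h1, h2, h3⟩ := hch
  have h2' : List.Chain' G.adj (a :: c :: t) :=
    List.isChain_cons_cons.mpr ⟨hadj, h2.tail.tail⟩
  have hchq : List.Chain' G.adj q := by
    have : List.Chain' G.adj ((A1 :: s) ++ a :: c :: t) := by
      rw [List.Chain', List.isChain_append]
      exact ⟨h1, h2', by simpa using h3⟩
    simpa [hq] using this
  -- proper
  obtain ⟨a', t', hpa, haA, htA⟩ := hproper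
  have ha' : a' = A1 ∧ t' = s ++ a :: b :: c :: t := by
    rw [hp] at hpa; exact ⟨(List.cons.injEq _ _ _ _ ▸ hpa).1.symm,
      (List.cons.injEq _ _ _ _ ▸ hpa).2.symm⟩
  have hproperq : PDAG.ProperFrom A q := by
    refine ⟨A1, s ++ a :: c :: t, rfl, ha'.1 ▸ haA, ?_⟩
    intro x hx
    apply htA
    rw [ha'.2]
    simp at hx ⊢
    tauto
  -- ends in Y
  obtain ⟨y, hy, hyY⟩ := hends
  have hendq : PDAG.EndsIn q Y := by
    refine ⟨y, ?_, hyY⟩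
    have e1 : p = ([A1] ++ s ++ [a, b]) ++ c :: t := by rw [hp]; simp
    have e2 : q = ([A1] ++ s ++ [a]) ++ c :: t := by rw [hq]; simp
    rw [e1, List.getLast?_append_cons] at hy
    rw [e2, List.getLast?_append_cons]
    exact hy
  -- starts undir
  have hstartq : G.StartsUndir q := by
    have hVt : V1 :: t0 = s ++ a :: b :: c :: t := by
      have : p.tail = V1 :: t0 := by rw [hpeq]; rfl
      rw [hp] at this; simpa using this.symm
    cases s with
    | nil =>
      have hV1 : V1 = a := by simpa using (List.cons.injEq _ _ _ _ ▸ hVt).1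
      exact ⟨A1, a, c :: t, by simp [hq], hV1 ▸ hund⟩
    | cons x s' =>
      have hV1 : V1 = x := by simpa using (List.cons.injEq _ _ _ _ ▸ hVt).1
      exact ⟨A1, x, s' ++ a :: c :: t, by simp [hq], hV1 ▸ hund⟩
  have hviolq : G.ViolPath A Y q := by
    refine ⟨⟨⟨?_, hnodup.sublist hsub, hchq⟩, hpc.sublist hsub, hproperq, hendq⟩, hstartq⟩
    simp [hq]; omega
  have := hmin q hviolq
  rw [hp] at this
  simp [hq] at this
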